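/- Let p be a prime, q > 1 a power of p and k ≥ 2 an integer. Write P^{(k)}(X) = det(I − X·U^{(k)}) = Σ_{n=0}^{k−1} a_n^{(k)} X^n ∈ 𝔽_q[t][X]. Then a_0^{(k)} = 1, a_1^{(k)} ≡ −1 (mod t), and t divides a_n^{(k)} for every n ≥ 2. (In particular the trace of U^{(k)} is congruent to 1 modulo t.) -/

import Mathlib

open Polynomial

noncomputable section DrinfeldGM

/-- Integer-argument binomial coefficient `C(c,d)`, equal to `0` whenever any of
`c`, `d`, `c - d` is negative. -/
def intChoose (c d : ℤ) : ℤ :=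
  if 0 ≤ c ∧ 0 ≤ d ∧ d ≤ c then (Nat.choose c.toNat d.toNat : ℤ) else 0

/-- The `(i,j)` entry of the matrix of the `U`-operator on `S_k(Γ₁(t))` in the
Bandini–Valentino basis (here `t` is the polynomial variable `X`).  For `i = j` it is
`(-t)^j C(k-2-j, j)`; for `i = j + h(q-1)` with `h ≠ 0` (equivalently `(q-1) ∣ i - j`,
`i ≠ j`, in which case `h(q-1) = i - j`) it is
`-t^j (C(k-2-i, j-i) + (-1)^{j+1} C(k-2-i, j))`; and it is `0` otherwise. -/
def Uent (F : Type*) [Field F] (q k : ℕ) (i j : ℕ) : Polynomial F :=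
  if i = j then
    (-Polynomial.X : Polynomial F) ^ j * ((intChoose ((k : ℤ) - 2 - (j : ℤ)) (j : ℤ) : ℤ) : Polynomial F)
  else if ((q : ℤ) - 1) ∣ ((i : ℤ) - (j : ℤ)) then
    -((Polynomial.X : Polynomial F) ^ j *
      ((intChoose ((k : ℤ) - 2 - (i : ℤ)) ((j : ℤ) - (i : ℤ)) +
        (-1) ^ (j + 1) * intChoose ((k : ℤ) - 2 - (i : ℤ)) (j : ℤ) : ℤ) : Polynomial F))
  else 0

/-- The representing matrix `U^{(k)} ∈ M_{k-1}(𝔽_q[t])` of the `U`-operator on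
`S_k(Γ₁(t))`, rows and columns indexed by `0, …, k-2`. -/
def Umat (F : Type*) [Field F] (q k : ℕ) :
    Matrix (Fin (k - 1)) (Fin (k - 1)) (Polynomial F) :=
  Matrix.of fun i j => Uent F q k (i : ℕ) (j : ℕ)

/-- A matrix over `𝔽_q[[t]]` is *glissando* if every entry of its `j`-th column is an
`𝔽_q`-multiple of `t^j`. -/
def Glissando {F : Type*} [Field F] {m n : ℕ}
    (B : Matrix (Fin m) (Fin n) (PowerSeries F)) : Prop :=
  ∀ i j, ∃ c : F, B i j = PowerSeries.C c * (PowerSeries.X : PowerSeries F) ^ (j : ℕ)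

/-- The inclusion `𝔽_q[t] → 𝔽_q[[t]]`. -/
def polyToPS (F : Type*) [Field F] : Polynomial F →+* PowerSeries F :=
  Polynomial.coeToPowerSeries.ringHom

/-- The inclusion of `𝔽_q[[t]]` into a fixed algebraic closure `K̄` of `K = 𝔽_q((t))`. -/
def psToKbar (F : Type*) [Field F] :
    PowerSeries F →+* AlgebraicClosure (LaurentSeries F) :=
  (algebraMap (LaurentSeries F) (AlgebraicClosure (LaurentSeries F))).comp
    (algebraMap (PowerSeries F) (LaurentSeries F))

/-- The inclusion `𝔽_q[t] → K̄`. -/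
def polyToKbar (F : Type*) [Field F] :
    Polynomial F →+* AlgebraicClosure (LaurentSeries F) :=
  (psToKbar F).comp (polyToPS F)

/-- The element `t` of `K̄`. -/
def tbar (F : Type*) [Field F] : AlgebraicClosure (LaurentSeries F) :=
  psToKbar F PowerSeries.X

/-- Integrality over `𝔽_q[[t]]` of an element of `K̄`. -/
def IntegralPS (F : Type*) [Field F] (x : AlgebraicClosure (LaurentSeries F)) : Prop :=
  letI : Algebra (PowerSeries F) (AlgebraicClosure (LaurentSeries F)) := (psToKbar F).toAlgebra
  IsIntegral (PowerSeries F) x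

/-- `HasVal F λ α` says that `λ ∈ K̄` is nonzero and has valuation `α` for the unique
extension `v` to `K̄` of the `t`-adic valuation with `v(t) = 1`: writing `α = a/b` with
`b > 0`, this means that both `λ^b/t^a` and `t^a/λ^b` are integral over `𝔽_q[[t]]`. -/
def HasVal (F : Type*) [Field F] (lam : AlgebraicClosure (LaurentSeries F)) (α : ℚ) : Prop :=
  lam ≠ 0 ∧ ∃ a b : ℤ, 0 < b ∧ α = (a : ℚ) / (b : ℚ) ∧
    IntegralPS F (lam ^ b / tbar F ^ a) ∧ IntegralPS F (tbar F ^ a / lam ^ b)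

/-- `d(k, α)`: the number of roots `λ` of `det(X·I - U^{(k)})` in `K̄` with `v(λ) = α`,
counted with multiplicity.  This is the dimension of the slope-`α` generalized eigenspace
of the `U`-operator on `S_k(Γ₁(t))`. -/
def dDim (F : Type*) [Field F] (q k : ℕ) (α : ℚ) : ℕ :=
  letI := Classical.decPred fun lam : AlgebraicClosure (LaurentSeries F) => HasVal F lam α
  Multiset.card <| Multiset.filter (fun lam => HasVal F lam α) <|
    (((Umat F q k).charpoly).map (polyToKbar F)).roots

/-- `det(I - t^l X B)` for a square matrix `B` over `𝔽_q[[t]]`, as a polynomial in `X`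
over `𝔽_q[[t]]`. -/
def charSeriesTw (F : Type*) [Field F] {m : ℕ} (l : ℕ)
    (B : Matrix (Fin m) (Fin m) (PowerSeries F)) : Polynomial (PowerSeries F) :=
  Matrix.det (1 - (Polynomial.C ((PowerSeries.X : PowerSeries F) ^ l) * Polynomial.X) •
    B.map Polynomial.C)

/-- `det(I - X B)` for a square matrix `B` over `𝔽_q[[t]]`. -/
def charSeriesPS (F : Type*) [Field F] {m : ℕ}
    (B : Matrix (Fin m) (Fin m) (PowerSeries F)) : Polynomial (PowerSeries F) :=
  Matrix.det (1 - (Polynomial.X : Polynomial (PowerSeries F)) • B.map Polynomial.C)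

/-- `P^{(k)}(X) = det(I - X·U^{(k)}) ∈ 𝔽_q[t][X]`. -/
def Pser (F : Type*) [Field F] (q k : ℕ) : Polynomial (Polynomial F) :=
  Matrix.det (1 - (Polynomial.X : Polynomial (Polynomial F)) • (Umat F q k).map Polynomial.C)


lemma Uent_eval_zero_of_ne (F : Type) [Field F] (q k i j : ℕ) (hj : j ≠ 0) :
    (Uent F q k i j).eval 0 = 0 := by
  unfold Uent
  split_ifs with h1 h2 <;> simp [zero_pow hj]

lemma Uent_eval_zero_zero (F : Type) [Field F] (q k : ℕ) (hk : 2 ≤ k) :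
    (Uent F q k 0 0).eval 0 = 1 := by
  unfold Uent
  rw [if_pos rfl]
  have h : intChoose ((k : ℤ) - 2 - ((0:ℕ) : ℤ)) ((0:ℕ) : ℤ) = 1 := by
    unfold intChoose
    rw [if_pos]
    · simp
    · refine ⟨by push_cast; omega, by norm_num, by push_cast; omega⟩
  rw [h]
  simp

/-- Writing `P^{(k)}(X) = det(I - X·U^{(k)}) = Σ a_n X^n ∈ 𝔽_q[t][X]`, one has
`a_0 = 1`, `a_1 ≡ -1 (mod t)`, and `t ∣ a_n` for every `n ≥ 2`; in particular the trace
of `U^{(k)}` is congruent to `1` modulo `t`. -/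
theorem Pser_coeff_mod_t
    (p q : ℕ) (hp : p.Prime) (hq : ∃ e : ℕ, 1 ≤ e ∧ q = p ^ e)
    (F : Type) [Field F] [Fintype F] (hF : Fintype.card F = q)
    (k : ℕ) (hk : 2 ≤ k) :
    (Pser F q k).coeff 0 = 1 ∧
    (Polynomial.X : Polynomial F) ∣ ((Pser F q k).coeff 1 + 1) ∧
    (∀ n : ℕ, 2 ≤ n → (Polynomial.X : Polynomial F) ∣ (Pser F q k).coeff n) ∧
    (Polynomial.X : Polynomial F) ∣ (Matrix.trace (Umat F q k) - 1) := by
  classical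
  have hkk : 0 < k - 1 := by omega
  set i0 : Fin (k - 1) := ⟨0, hkk⟩ with hi0
  set A : Matrix (Fin (k-1)) (Fin (k-1)) (Polynomial (Polynomial F)) :=
    1 - (Polynomial.X : Polynomial (Polynomial F)) • (Umat F q k).map Polynomial.C with hA
  -- reduction of P mod (t) is 1 - X
  have hQ : (Pser F q k).map (evalRingHom (0 : F)) = 1 - Polynomial.X := by
    have h1 : (Pser F q k).map (evalRingHom (0 : F)) =
        Matrix.det (A.map (mapRingHom (evalRingHom (0 : F)))) := by
      rw [Pser, ← hA, ← Polynomial.coe_mapRingHom, RingHom.map_det,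
        RingHom.mapMatrix_apply]
    rw [h1, Matrix.det_of_lowerTriangular]
    · rw [Fintype.prod_eq_single i0]
      · have hne : A i0 i0 = 1 - Polynomial.X * Polynomial.C (Uent F q k 0 0) := by
          simp [hA, Matrix.sub_apply, Matrix.one_apply, Matrix.smul_apply, Umat, hi0]
        rw [Matrix.map_apply, hne]
        simp [Polynomial.coe_mapRingHom, Polynomial.map_sub,
          Uent_eval_zero_zero F q k hk]
      · intro b hb
        have hbv : (b : ℕ) ≠ 0 := by
          intro h
          exact hb (Fin.ext (by simp [hi0, h]))
        have hne : A b b = 1 - Polynomial.X * Polynomial.C (Uent F q k b b) := by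
          simp [hA, Matrix.sub_apply, Matrix.one_apply, Matrix.smul_apply, Umat]
        rw [Matrix.map_apply, hne]
        simp [Polynomial.coe_mapRingHom, Polynomial.map_sub,
          Uent_eval_zero_of_ne F q k b b hbv]
    · intro i j hij
      have hij2 : i < j := hij
      have hij' : (i : Fin (k-1)) ≠ j := ne_of_lt hij2
      have hjv : (j : ℕ) ≠ 0 := by
        have : (i : ℕ) < (j : ℕ) := hij2
        omega
      have hne : A i j = -(Polynomial.X * Polynomial.C (Uent F q k i j)) := by
        simp [hA, Matrix.sub_apply, Matrix.one_apply, Matrix.smul_apply, Umat,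
          Matrix.one_apply_ne hij']
      rw [Matrix.map_apply, hne]
      simp [Polynomial.coe_mapRingHom, Uent_eval_zero_of_ne F q k i j hjv]
  -- constant coefficient is exactly 1
  have h0 : (Pser F q k).coeff 0 = 1 := by
    rw [Polynomial.coeff_zero_eq_eval_zero]
    have : (Pser F q k).eval 0 = (evalRingHom (0 : Polynomial F)) (Matrix.det A) := by
      rw [Pser, ← hA]; rfl
    rw [this, RingHom.map_det, RingHom.mapMatrix_apply]
    have hA1 : A.map (evalRingHom (0 : Polynomial F)) = 1 := by
      ext i j
      by_cases h : i = j <;>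
        simp [hA, Matrix.map_apply, Matrix.sub_apply, Matrix.one_apply,
          Matrix.smul_apply, h]
    rw [hA1, Matrix.det_one]
  refine ⟨h0, ?_, ?_, ?_⟩
  · rw [Polynomial.X_dvd_iff]
    have := congrArg (fun P => Polynomial.coeff P 1) hQ
    simp only [Polynomial.coeff_map, Polynomial.coeff_sub, Polynomial.coeff_one,
      Polynomial.coeff_X_one] at this
    rw [Polynomial.coeff_add, Polynomial.coeff_one]
    have h1 : ((Pser F q k).coeff 1).eval 0 = -1 := by
      simpa using this
    rw [← Polynomial.coeff_zero_eq_eval_zero] at h1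
    simp [h1]
  · intro n hn
    rw [Polynomial.X_dvd_iff, Polynomial.coeff_zero_eq_eval_zero]
    have := congrArg (fun P => Polynomial.coeff P n) hQ
    simp only [Polynomial.coeff_map, Polynomial.coeff_sub, Polynomial.coeff_one,
      Polynomial.coeff_X] at this
    have hn0 : n ≠ 0 := by omega
    have hn1 : n ≠ 1 := by omega
    simpa [hn0, hn1, Ne.symm hn1] using this
  · rw [Polynomial.X_dvd_iff, Polynomial.coeff_zero_eq_eval_zero]
    have htr : (Matrix.trace (Umat F q k)).eval 0 = 1 := by
      rw [Matrix.trace]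
      have : ∀ i : Fin (k-1), (Umat F q k).diag i = Uent F q k i i := by
        intro i; simp [Matrix.diag, Umat]
      rw [show ((∑ i, (Umat F q k).diag i).eval 0)
            = ∑ i, ((Umat F q k).diag i).eval 0 by
          simp [Polynomial.eval_finset_sum]]
      rw [Fintype.sum_eq_single i0]
      · rw [this i0]; simpa [hi0] using Uent_eval_zero_zero F q k hk
      · intro b hb
        have hbv : (b : ℕ) ≠ 0 := by
          intro h
          exact hb (Fin.ext (by simp [hi0, h]))
        rw [this b]
        exact Uent_eval_zero_of_ne F q k b b hbv
    simp [htr]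

end DrinfeldGM
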